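/- Let $0 < \theta < 1 < p < r$, $A > 0$, $G_0 > 0$, and $0 < C < m(t_0)$ where $m(t) = t^{\theta+p-1}A - t^{\theta+r-1}G_0$ and $t_0$ is the unique maximizer of $m$ on $(0,\infty)$. Then there exist unique $t_1, t_2$ with $0 < t_1 < t_0 < t_2$ such that $m(t_1) = m(t_2) = C$. Moreover $m'(t_1) > 0$ and $m'(t_2) < 0$. -/

import Mathlib

open Real Set

/-- If `0 < C < m(t₀)` where `t₀` is the unique maximizer of
`m(t) = t^{θ+p-1}A - t^{θ+r-1}G₀` on `(0,∞)`, then the equation `m(t) = C` has exactly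
two solutions `t₁ < t₀ < t₂`, with `m'(t₁) > 0` and `m'(t₂) < 0`. -/
theorem stmt6 (p r θ A G₀ C : ℝ) (hθ0 : 0 < θ) (hθ1 : θ < 1) (hp : 1 < p) (hpr : p < r)
    (hA : 0 < A) (hG : 0 < G₀)
    (m : ℝ → ℝ) (hm : m = fun t => t ^ (θ + p - 1) * A - t ^ (θ + r - 1) * G₀)
    (t₀ : ℝ) (ht₀pos : 0 < t₀) (ht₀max : ∀ t ∈ Ioi (0 : ℝ), t ≠ t₀ → m t < m t₀)
    (hC0 : 0 < C) (hC : C < m t₀) :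
    ∃ t₁ t₂ : ℝ, 0 < t₁ ∧ t₁ < t₀ ∧ t₀ < t₂ ∧
      m t₁ = C ∧ m t₂ = C ∧
      0 < deriv m t₁ ∧ deriv m t₂ < 0 ∧
      (∀ s : ℝ, 0 < s → s < t₀ → m s = C → s = t₁) ∧
      (∀ s : ℝ, t₀ < s → m s = C → s = t₂) := by
  set a : ℝ := θ + p - 1 with ha_def
  set b : ℝ := θ + r - 1 with hb_def
  have ha : 0 < a := by simp only [ha_def]; linarith
  have hb : 0 < b := by simp only [hb_def]; linarith
  have hab : a < b := by simp only [ha_def, hb_def]; linarith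
  have hba : 0 < b - a := by linarith
  -- the critical point
  set s₀ : ℝ := (a * A / (b * G₀)) ^ (b - a)⁻¹ with hs₀_def
  have hq : 0 < a * A / (b * G₀) := by positivity
  have hs₀ : 0 < s₀ := rpow_pos_of_pos hq _
  have hs₀pow : s₀ ^ (b - a) = a * A / (b * G₀) := rpow_inv_rpow hq.le hba.ne'
  -- derivative formula
  have hderiv : ∀ t : ℝ, 0 < t →
      HasDerivAt m (a * t ^ (a - 1) * A - b * t ^ (b - 1) * G₀) t := by
    intro t ht
    rw [hm]
    exact ((Real.hasDerivAt_rpow_const (Or.inl ht.ne')).mul_const A).sub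
      ((Real.hasDerivAt_rpow_const (Or.inl ht.ne')).mul_const G₀)
  -- sign of derivative
  have hfact : ∀ t : ℝ, 0 < t →
      a * t ^ (a - 1) * A - b * t ^ (b - 1) * G₀
        = t ^ (a - 1) * (a * A - b * G₀ * t ^ (b - a)) := by
    intro t ht
    have : t ^ (b - 1) = t ^ (a - 1) * t ^ (b - a) := by
      rw [← Real.rpow_add ht]; ring_nf
    rw [this]; ring
  have hsignpos : ∀ t : ℝ, 0 < t → t < s₀ →
      0 < a * t ^ (a - 1) * A - b * t ^ (b - 1) * G₀ := by
    intro t ht hts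
    rw [hfact t ht]
    have h1 : t ^ (b - a) < s₀ ^ (b - a) := rpow_lt_rpow ht.le hts hba
    rw [hs₀pow] at h1
    have h2 : b * G₀ * t ^ (b - a) < a * A := by
      rw [lt_div_iff₀ (by positivity)] at h1; nlinarith
    have h3 : (0:ℝ) < t ^ (a - 1) := rpow_pos_of_pos ht _
    nlinarith
  have hsignneg : ∀ t : ℝ, s₀ < t →
      a * t ^ (a - 1) * A - b * t ^ (b - 1) * G₀ < 0 := by
    intro t hts
    have ht : 0 < t := hs₀.trans hts
    rw [hfact t ht]
    have h1 : s₀ ^ (b - a) < t ^ (b - a) := rpow_lt_rpow hs₀.le hts hba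
    rw [hs₀pow] at h1
    have h2 : a * A < b * G₀ * t ^ (b - a) := by
      rw [div_lt_iff₀ (by positivity)] at h1; nlinarith
    have h3 : (0:ℝ) < t ^ (a - 1) := rpow_pos_of_pos ht _
    nlinarith
  -- continuity of m on [0, ∞)
  have hcont : ContinuousOn m (Ici (0:ℝ)) := by
    rw [hm]
    intro x hx
    refine ContinuousWithinAt.sub (ContinuousWithinAt.mul ?_ continuousWithinAt_const)
      (ContinuousWithinAt.mul ?_ continuousWithinAt_const)
    · exact (Real.continuousAt_rpow_const x a (Or.inr ha.le)).continuousWithinAt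
    · exact (Real.continuousAt_rpow_const x b (Or.inr hb.le)).continuousWithinAt
  -- monotonicity on [0, s₀]
  have hmono : StrictMonoOn m (Icc 0 s₀) := by
    apply strictMonoOn_of_deriv_pos (convex_Icc _ _)
      (hcont.mono (Icc_subset_Ici_self))
    intro x hx
    rw [interior_Icc] at hx
    rw [(hderiv x hx.1).deriv]
    exact hsignpos x hx.1 hx.2
  -- antitonicity on [s₀, ∞)
  have hanti : StrictAntiOn m (Ici s₀) := by
    apply strictAntiOn_of_deriv_neg (convex_Ici _)
      (hcont.mono (Ici_subset_Ici.mpr hs₀.le))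
    intro x hx
    rw [interior_Ici] at hx
    rw [(hderiv x (hs₀.trans hx)).deriv]
    exact hsignneg x hx
  -- t₀ = s₀
  have ht₀eq : t₀ = s₀ := by
    by_contra hne
    rcases lt_or_gt_of_ne hne with h | h
    · have h1 : m t₀ < m s₀ := hmono ⟨ht₀pos.le, h.le⟩ ⟨hs₀.le, le_refl _⟩ h
      have h2 : m s₀ < m t₀ := ht₀max s₀ hs₀ (fun he => hne he.symm)
      linarith
    · have h1 : m t₀ < m s₀ := hanti (le_refl s₀) h.le h
      have h2 : m s₀ < m t₀ := ht₀max s₀ hs₀ (fun he => hne he.symm)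
      linarith
  -- m 0 = 0
  have hm0 : m 0 = 0 := by
    rw [hm]; simp [Real.zero_rpow ha.ne', Real.zero_rpow hb.ne']
  -- existence of t₁
  obtain ⟨t₁, ht₁mem, ht₁⟩ : ∃ t₁ ∈ Ioo (0:ℝ) t₀, m t₁ = C := by
    have := intermediate_value_Ioo (le_of_lt ht₀pos)
      (hcont.mono (Icc_subset_Ici_self))
    have hCmem : C ∈ Ioo (m 0) (m t₀) := by rw [hm0]; exact ⟨hC0, hC⟩
    obtain ⟨t₁, h1, h2⟩ := this hCmem
    exact ⟨t₁, h1, h2⟩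
  -- a point where m is below C
  have hbig : ∃ T : ℝ, t₀ < T ∧ m T < C := by
    set T : ℝ := max (t₀ + 1) ((A / G₀) ^ (b - a)⁻¹ + 1) with hT_def
    have hT1 : t₀ + 1 ≤ T := le_max_left _ _
    have hT : 0 < T := by linarith
    have hAG : 0 < A / G₀ := by positivity
    have hT2 : (A / G₀) ^ (b - a)⁻¹ < T :=
      lt_of_lt_of_le (lt_add_one _) (le_max_right _ _)
    have h1 : A / G₀ < T ^ (b - a) := by
      have := rpow_lt_rpow (rpow_pos_of_pos hAG _).le hT2 hba
      rwa [rpow_inv_rpow hAG.le hba.ne'] at this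
    have h2 : A < T ^ (b - a) * G₀ := by
      rw [div_lt_iff₀ hG] at h1; linarith
    refine ⟨T, by linarith, ?_⟩
    have hTb : T ^ b = T ^ a * T ^ (b - a) := by
      rw [← Real.rpow_add hT]; ring_nf
    have hTa : (0:ℝ) < T ^ a := rpow_pos_of_pos hT _
    have : m T < 0 := by
      rw [hm]; simp only
      rw [hTb]
      calc T ^ a * A - T ^ a * T ^ (b - a) * G₀
          = T ^ a * (A - T ^ (b - a) * G₀) := by ring
        _ < 0 := mul_neg_of_pos_of_neg hTa (by linarith)
    linarith
  obtain ⟨T, hTt₀, hTC⟩ := hbig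
  -- existence of t₂
  obtain ⟨t₂, ht₂mem, ht₂⟩ : ∃ t₂ ∈ Ioo t₀ T, m t₂ = C := by
    have hsub : Icc t₀ T ⊆ Ici (0:ℝ) := fun x hx => le_trans ht₀pos.le hx.1
    have hCmem : C ∈ Ioo (m T) (m t₀) := ⟨hTC, hC⟩
    obtain ⟨t₂, h1, h2⟩ := intermediate_value_Ioo' (le_of_lt hTt₀) (hcont.mono hsub) hCmem
    exact ⟨t₂, h1, h2⟩
  refine ⟨t₁, t₂, ht₁mem.1, ht₁mem.2, ht₂mem.1, ht₁, ht₂, ?_, ?_, ?_, ?_⟩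
  · rw [(hderiv t₁ ht₁mem.1).deriv]
    exact hsignpos t₁ ht₁mem.1 (ht₀eq ▸ ht₁mem.2)
  · rw [(hderiv t₂ (ht₀pos.trans ht₂mem.1)).deriv]
    exact hsignneg t₂ (ht₀eq ▸ ht₂mem.1)
  · intro s hs0 hst₀ hsC
    apply hmono.injOn ⟨hs0.le, by rw [← ht₀eq]; exact hst₀.le⟩
      ⟨ht₁mem.1.le, by rw [← ht₀eq]; exact ht₁mem.2.le⟩
    rw [hsC, ht₁]
  · intro s hst₀ hsC
    apply hanti.injOn (by rw [← ht₀eq] at *; exact hst₀.le)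
      (by rw [← ht₀eq] at *; exact ht₂mem.1.le)
    rw [hsC, ht₂]
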